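/- Let p be a prime, B a group, and A a normal subgroup of B isomorphic to ℤ² (written additively). Suppose some b ∈ B acts by conjugation on A/pA ≅ (ℤ/pℤ)² with no non-zero fixed vector (i.e. the induced automorphism θ_p(b) of A/pA has θ_p(b) − I invertible). Then A = [B,A] + pA, and consequently A is contained in every normal subgroup of p-power index in B. -/

import Mathlib

/-- The subgroup of `m`-th powers (written additively: `m`-th multiples) of elements of `A`. -/
def powSubgroup {B : Type*} [Group B] (A : Subgroup B) (m : ℕ) : Subgroup B :=
  Subgroup.closure {x : B | ∃ a ∈ A, x = a ^ m}

lemma key_lemma (p : ℕ) (hp : p.Prime) (g : ℤ × ℤ →+ ℤ × ℤ)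
    (h : ∀ v : ℤ × ℤ, ((p:ℤ) ∣ (g v).1 ∧ (p:ℤ) ∣ (g v).2) → (p:ℤ) ∣ v.1 ∧ (p:ℤ) ∣ v.2) :
    ∀ v : ℤ × ℤ, ∃ w : ℤ × ℤ, (p:ℤ) ∣ (v - g w).1 ∧ (p:ℤ) ∣ (v - g w).2 := by
  haveI : Fact p.Prime := ⟨hp⟩
  set a := (g (1, 0)).1
  set b := (g (1, 0)).2
  set c := (g (0, 1)).1
  set d := (g (0, 1)).2
  have hg : ∀ v : ℤ × ℤ, g v = (a * v.1 + c * v.2, b * v.1 + d * v.2) := by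
    intro v
    have hv : v = v.1 • ((1:ℤ), (0:ℤ)) + v.2 • ((0:ℤ), (1:ℤ)) := by
      ext <;> simp
    rw [hv, map_add, map_zsmul, map_zsmul]
    ext <;> simp [a, b, c, d, mul_comm]
  let r : ℤ × ℤ → ZMod p × ZMod p := fun v => ((v.1 : ZMod p), (v.2 : ZMod p))
  let G : ZMod p × ZMod p → ZMod p × ZMod p :=
    fun x => ((a:ZMod p) * x.1 + (c:ZMod p) * x.2, (b:ZMod p) * x.1 + (d:ZMod p) * x.2)
  have hcomm : ∀ v, r (g v) = G (r v) := by
    intro v; rw [hg]; simp only [r, G]; push_cast; rfl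
  have hr0 : ∀ v : ℤ × ℤ, r v = 0 ↔ ((p:ℤ) ∣ v.1 ∧ (p:ℤ) ∣ v.2) := by
    intro v
    constructor
    · intro hv
      have h1 : (v.1 : ZMod p) = 0 := congrArg Prod.fst hv
      have h2 : (v.2 : ZMod p) = 0 := congrArg Prod.snd hv
      exact ⟨(ZMod.intCast_zmod_eq_zero_iff_dvd _ _).mp h1,
        (ZMod.intCast_zmod_eq_zero_iff_dvd _ _).mp h2⟩
    · intro hv
      have h1 : (v.1 : ZMod p) = 0 := (ZMod.intCast_zmod_eq_zero_iff_dvd _ _).mpr hv.1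
      have h2 : (v.2 : ZMod p) = 0 := (ZMod.intCast_zmod_eq_zero_iff_dvd _ _).mpr hv.2
      simp [r, h1, h2]
  have hrsurj : Function.Surjective r := by
    intro x
    obtain ⟨m, hm⟩ := ZMod.intCast_surjective (n := p) x.1
    obtain ⟨n, hn⟩ := ZMod.intCast_surjective (n := p) x.2
    exact ⟨(m, n), by simp [r, hm, hn]⟩
  have hGsub : ∀ x y, G x - G y = G (x - y) := by
    intro x y; simp only [G, Prod.mk_sub_mk, Prod.fst_sub, Prod.snd_sub]; ring_nf
  have hGinj : Function.Injective G := by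
    intro x y hxy
    obtain ⟨u, hu⟩ := hrsurj (x - y)
    have : G (x - y) = 0 := by rw [← hGsub, hxy, sub_self]
    rw [← hu, ← hcomm] at this
    have hdvd := h u ((hr0 _).mp this)
    have : r u = 0 := (hr0 _).mpr hdvd
    rw [this] at hu
    exact sub_eq_zero.mp hu.symm
  have hGsurj : Function.Surjective G := Finite.surjective_of_injective hGinj
  intro v
  obtain ⟨x, hx⟩ := hGsurj (r v)
  obtain ⟨w, hw⟩ := hrsurj x
  refine ⟨w, (hr0 _).mp ?_⟩
  have : r (v - g w) = r v - r (g w) := by simp [r]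
  rw [this, hcomm, hw, hx, sub_self]

/-- Let `p` be a prime, `B` a group and `A` a normal subgroup of `B`
isomorphic to `ℤ²`.  Suppose some `b ∈ B` acts by conjugation on `A/pA` with no non-zero
fixed vector (any `a ∈ A` which is fixed mod `pA` lies in `pA`).  Then `A = [B,A]·(pA)`,
and consequently `A` is contained in every normal subgroup of `p`-power index in `B`. -/
theorem stmt_4 (p : ℕ) (hp : p.Prime) (B : Type*) [Group B] (A : Subgroup B)
    (hA : A.Normal) (e : A ≃* Multiplicative (ℤ × ℤ))
    (hb : ∃ b : B, ∀ a ∈ A, b * a * b⁻¹ * a⁻¹ ∈ powSubgroup A p → a ∈ powSubgroup A p) :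
    A = ⁅(⊤ : Subgroup B), A⁆ ⊔ powSubgroup A p ∧
      ∀ N : Subgroup B, N.Normal → (∃ n : ℕ, N.index = p ^ n) → A ≤ N := by
  haveI : Fact p.Prime := ⟨hp⟩
  obtain ⟨b, hb⟩ := hb
  -- A is commutative
  have hacomm : ∀ x y : A, x * y = y * x := fun x y =>
    e.injective (by rw [map_mul, map_mul, mul_comm])
  -- membership in powSubgroup
  have hmem : ∀ x : B, x ∈ powSubgroup A p ↔ ∃ c : A, (c : B) ^ p = x := by
    intro x
    constructor
    · intro hx
      refine Subgroup.closure_induction ?_ ?_ ?_ ?_ hx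
      · rintro y ⟨a, ha, rfl⟩
        exact ⟨⟨a, ha⟩, rfl⟩
      · exact ⟨1, by simp⟩
      · rintro y z - - ⟨c, rfl⟩ ⟨d, rfl⟩
        refine ⟨c * d, ?_⟩
        have : (c * d) ^ p = c ^ p * d ^ p := Commute.mul_pow (hacomm c d) p
        rw [← Subgroup.coe_pow, ← Subgroup.coe_pow, ← Subgroup.coe_pow, ← Subgroup.coe_mul,
          this]
      · rintro y - ⟨c, rfl⟩
        exact ⟨c⁻¹, by rw [← Subgroup.coe_pow, ← Subgroup.coe_pow, ← Subgroup.coe_inv,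
          inv_pow]⟩
    · rintro ⟨c, rfl⟩
      exact Subgroup.subset_closure ⟨(c : B), c.2, rfl⟩
  have hmemA : ∀ a : A, ((a : B) ∈ powSubgroup A p ↔ ∃ c : A, c ^ p = a) := by
    intro a
    rw [hmem]
    constructor
    · rintro ⟨c, hc⟩
      exact ⟨c, Subtype.ext (by rw [Subgroup.coe_pow, hc])⟩
    · rintro ⟨c, rfl⟩
      exact ⟨c, by rw [Subgroup.coe_pow]⟩
  -- conjugation by b as a hom of A
  let conj : A →* A :=
    { toFun := fun a => ⟨b * (a : B) * b⁻¹, hA.conj_mem _ a.2 b⟩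
      map_one' := by ext; simp
      map_mul' := by
        intro x y
        ext
        push_cast
        group }
  -- g' a = (conj a) * a⁻¹
  let g' : A → A := fun a => conj a * a⁻¹
  have hg'coe : ∀ a : A, (g' a : B) = b * (a : B) * b⁻¹ * (a : B)⁻¹ := by
    intro a; simp [g', conj]
  -- additive picture
  let F : A → ℤ × ℤ := fun a => Multiplicative.toAdd (e a)
  have hFadd : ∀ x y : A, F (x * y) = F x + F y := by
    intro x y; simp [F, map_mul]
  have hFsub : ∀ x y : A, F (x * y⁻¹) = F x - F y := by
    intro x y; simp [F, map_mul, sub_eq_add_neg]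
  have hFsurj : ∀ v : ℤ × ℤ, F (e.symm (Multiplicative.ofAdd v)) = v := by
    intro v; simp [F]
  have hFinj : Function.Injective F := by
    intro x y h
    exact e.injective (Multiplicative.toAdd.injective h)
  have hFconj : ∀ a : A, F (g' a) = F (conj a) - F a := fun a => hFsub _ _
  have hg'mul : ∀ x y : A, g' (x * y) = g' x * g' y := by
    intro x y
    apply hFinj
    rw [hFconj, hFadd (g' x) (g' y), hFconj x, hFconj y, map_mul,
      hFadd (conj x) (conj y), hFadd x y]
    ring
  let gZ : ℤ × ℤ →+ ℤ × ℤ :=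
    { toFun := fun v => F (g' (e.symm (Multiplicative.ofAdd v)))
      map_zero' := by
        have : g' (1 : A) = 1 := by simp [g']
        simp [F, this]
      map_add' := by
        intro v w
        show F (g' (e.symm (Multiplicative.ofAdd (v + w))))
            = F (g' (e.symm (Multiplicative.ofAdd v))) + F (g' (e.symm (Multiplicative.ofAdd w)))
        rw [ofAdd_add, map_mul, hg'mul, hFadd] }
  have hgZ : ∀ a : A, gZ (F a) = F (g' a) := by
    intro a
    show F (g' (e.symm (Multiplicative.ofAdd (Multiplicative.toAdd (e a))))) = F (g' a)
    simp
  -- characterization of pA via F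
  have hmemF : ∀ a : A, ((a : B) ∈ powSubgroup A p ↔
      ((p:ℤ) ∣ (F a).1 ∧ (p:ℤ) ∣ (F a).2)) := by
    intro a
    rw [hmemA]
    constructor
    · rintro ⟨c, rfl⟩
      have : F (c ^ p) = (p : ℕ) • Multiplicative.toAdd (e c) := by
        simp [F, map_pow]
      rw [this]
      refine ⟨⟨(Multiplicative.toAdd (e c)).1, ?_⟩, ⟨(Multiplicative.toAdd (e c)).2, ?_⟩⟩ <;>
        simp [Prod.smul_def, nsmul_eq_mul]
    · rintro ⟨⟨m, hm⟩, ⟨n, hn⟩⟩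
      refine ⟨e.symm (Multiplicative.ofAdd (m, n)), ?_⟩
      apply e.injective
      rw [map_pow, MulEquiv.apply_symm_apply, ← ofAdd_nsmul]
      have hFa : p • ((m, n) : ℤ × ℤ) = F a := by
        ext
        · simpa [Prod.smul_def, nsmul_eq_mul] using hm.symm
        · simpa [Prod.smul_def, nsmul_eq_mul] using hn.symm
      rw [hFa]
      simp [F]
  -- hypothesis for key lemma
  have hkey : ∀ v : ℤ × ℤ, ((p:ℤ) ∣ (gZ v).1 ∧ (p:ℤ) ∣ (gZ v).2) →
      (p:ℤ) ∣ v.1 ∧ (p:ℤ) ∣ v.2 := by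
    intro v hv
    set a := e.symm (Multiplicative.ofAdd v) with ha
    have hFa : F a = v := hFsurj v
    have hgv : gZ v = F (g' a) := rfl
    rw [hgv] at hv
    have h1 : (g' a : B) ∈ powSubgroup A p := (hmemF _).mpr hv
    have h2 : (a : B) ∈ powSubgroup A p := by
      apply hb (a : B) a.2
      rw [← hg'coe]
      exact h1
    rw [← hFa]
    exact (hmemF a).mp h2
  -- Part 1
  have part1 : A = ⁅(⊤ : Subgroup B), A⁆ ⊔ powSubgroup A p := by
    apply le_antisymm
    · intro x hx
      set a : A := ⟨x, hx⟩ with hadef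
      obtain ⟨w, hw⟩ := key_lemma p hp gZ hkey (F a)
      set c := e.symm (Multiplicative.ofAdd w) with hc
      have hgw : gZ w = F (g' c) := rfl
      have hFsplit : F (a * (g' c)⁻¹) = F a - gZ w := by
        rw [hFsub, hgw]
      have h2 : ((a * (g' c)⁻¹ : A) : B) ∈ powSubgroup A p := by
        rw [hmemF]
        rw [hFsplit]
        exact hw
      have h3 : ((g' c : A) : B) ∈ ⁅(⊤ : Subgroup B), A⁆ := by
        rw [hg'coe]
        exact Subgroup.commutator_mem_commutator (Subgroup.mem_top b) c.2
      have hxeq : x = ((a * (g' c)⁻¹ : A) : B) * ((g' c : A) : B) := by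
        rw [← Subgroup.coe_mul, inv_mul_cancel_right]
      rw [hxeq]
      exact mul_mem (le_sup_right (α := Subgroup B) h2) (le_sup_left (α := Subgroup B) h3)
    · apply sup_le
      · rw [Subgroup.commutator_le]
        intro g _ a ha
        rw [commutatorElement_def]
        exact mul_mem (hA.conj_mem a ha g) (inv_mem ha)
      · rw [powSubgroup, Subgroup.closure_le]
        rintro x ⟨a, ha, rfl⟩
        exact pow_mem ha p
  -- Part 2
  have part2 : ∀ n : ℕ, ∀ N : Subgroup B, N.Normal → N.index = p ^ n → A ≤ N := by
    intro n
    induction n with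
    | zero =>
      intro N _ hN
      rw [pow_zero, Subgroup.index_eq_one] at hN
      rw [hN]
      exact le_top
    | succ n ih =>
      intro N hNnorm hidx
      haveI := hNnorm
      have hcard : Nat.card (B ⧸ N) = p ^ (n + 1) := by
        rw [← hidx]; rfl
      haveI : Finite (B ⧸ N) := Nat.finite_of_card_ne_zero (by
        rw [hcard]; exact pow_ne_zero _ hp.pos.ne')
      haveI : Nontrivial (B ⧸ N) := Finite.one_lt_card_iff_nontrivial.mp (by
        rw [hcard]; exact Nat.one_lt_pow (Nat.succ_ne_zero n) hp.one_lt)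
      have hpQ : IsPGroup p (B ⧸ N) := IsPGroup.of_card hcard
      have hZ : IsPGroup p (Subgroup.center (B ⧸ N)) := hpQ.to_subgroup _
      haveI : Nontrivial (Subgroup.center (B ⧸ N)) := hpQ.center_nontrivial
      obtain ⟨k, hk⟩ := hZ.exists_card_eq
      have hk1 : k ≠ 0 := by
        rintro rfl
        rw [pow_zero] at hk
        exact (Finite.one_lt_card).ne' hk
      have hpdvd : p ∣ Nat.card (Subgroup.center (B ⧸ N)) := hk ▸ dvd_pow_self p hk1
      haveI : Fintype (Subgroup.center (B ⧸ N)) := Fintype.ofFinite _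
      obtain ⟨z, hz⟩ := exists_prime_orderOf_dvd_card (G := ↥(Subgroup.center (B ⧸ N))) p
        (by rwa [← Nat.card_eq_fintype_card])
      set z' : B ⧸ N := (z : B ⧸ N) with hz'def
      have hz' : orderOf z' = p := by
        rw [← hz]
        exact orderOf_injective (Subgroup.center (B ⧸ N)).subtype
          (Subgroup.center (B ⧸ N)).subtype_injective z
      set M' := Subgroup.zpowers z' with hM'def
      have hM'card : Nat.card M' = p := by rw [Nat.card_zpowers, hz']
      have hM'le : M' ≤ Subgroup.center (B ⧸ N) := by
        rw [Subgroup.zpowers_le]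
        exact z.2
      haveI hM'norm : M'.Normal := by
        constructor
        intro m hm g
        have hcen := Subgroup.mem_center_iff.mp (hM'le hm) g
        rw [hcen, mul_inv_cancel_right]
        exact hm
      set M := M'.comap (QuotientGroup.mk' N) with hMdef
      haveI : M.Normal := hM'norm.comap (QuotientGroup.mk' N)
      have hMidx : M.index = p ^ n := by
        rw [hMdef, Subgroup.index_comap_of_surjective _ (QuotientGroup.mk'_surjective N)]
        have hmi := Subgroup.card_mul_index M'
        rw [hM'card, hcard, pow_succ, mul_comm (p ^ n) p] at hmi
        exact Nat.eq_of_mul_eq_mul_left hp.pos hmi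
      have hAM : A ≤ M := ih M ‹M.Normal› hMidx
      rw [part1]
      apply sup_le
      · rw [Subgroup.commutator_le]
        intro g _ a ha
        rw [← QuotientGroup.eq_one_iff]
        have hc : ((a : B) : B ⧸ N) ∈ M' := hAM ha
        have hcen := Subgroup.mem_center_iff.mp (hM'le hc)
        open scoped commutatorElement in
        have : ((⁅g, a⁆ : B) : B ⧸ N)
            = (g : B ⧸ N) * (a : B ⧸ N) * (g : B ⧸ N)⁻¹ * (a : B ⧸ N)⁻¹ := by
          rw [commutatorElement_def]
          push_cast
          rfl
        rw [this, hcen (g : B ⧸ N)]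
        group
      · rw [powSubgroup, Subgroup.closure_le]
        rintro x ⟨a, ha, rfl⟩
        rw [SetLike.mem_coe, ← QuotientGroup.eq_one_iff]
        have hc : ((a : B) : B ⧸ N) ∈ M' := hAM ha
        have hpow : ((⟨(a : B ⧸ N), hc⟩ : M') : B ⧸ N) ^ p = 1 := by
          have := pow_card_eq_one' (G := M') (x := ⟨(a : B ⧸ N), hc⟩)
          rw [hM'card] at this
          exact_mod_cast congrArg (Subtype.val) this
        have : ((a ^ p : B) : B ⧸ N) = ((a : B) : B ⧸ N) ^ p := by push_cast; rfl
        rw [this]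
        exact hpow
  exact ⟨part1, fun N hN ⟨n, hn⟩ => part2 n N hN hn⟩
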